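/- There exist a flow network G=(V,E) with nodes s,t and lifted graph G'=(V',E') as above, and a pair (y,y') ∈ [0,1]^E × [0,1]^{E'} that satisfies all path-induced cut inequalities but violates some symmetric path-induced cut inequality. Hence the path-induced cut inequalities together with their symmetric counterparts define a strictly tighter relaxation than the path-induced cut inequalities alone. -/

import Mathlib

open Finset
open scoped Classical

section LiftedDisjointPaths

variable {V : Type*} [Fintype V] [DecidableEq V]

/-- A `vw`-path in the digraph with edge set `E`, given by its (nonempty) list of vertices:
it starts at `v`, ends at `w`, and consecutive vertices are joined by edges of `E`. -/
def IsPath (E : Finset (V × V)) (v w : V) (p : List V) : Prop :=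
  p ≠ [] ∧ p.head? = some v ∧ p.getLast? = some w ∧ p.Chain' (fun a b => (a, b) ∈ E)

/-- The edge list `P_E` of a path given by its vertex list. -/
def pEdges (p : List V) : List (V × V) := p.zip p.tail

/-- The reachability relation `R`: `vw ∈ R` iff `v = w` or there is a `vw`-path in `G`. -/
def Reach (E : Finset (V × V)) (v w : V) : Prop :=
  v = w ∨ ∃ p, IsPath E v w p

/-- `G = (V,E)` is a flow network with source `s` and sink `t`: it is acyclic, every node is
reachable from `s`, and `t` is reachable from every node. -/
structure IsFlowNetwork (E : Finset (V × V)) (s t : V) : Prop where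
  acyclic : ∀ v w : V, (v, w) ∈ E → ¬ Reach E w v
  reach_from_source : ∀ v : V, Reach E s v
  reach_to_sink : ∀ v : V, Reach E v t

/-- The lifted graph `G' = (V', E')` has node set `V' = V ∖ {s,t}`. -/
def IsLiftedGraph (E' : Finset (V × V)) (s t : V) : Prop :=
  ∀ e ∈ E', e.1 ≠ s ∧ e.1 ≠ t ∧ e.2 ≠ s ∧ e.2 ≠ t

/-- `y ∈ [0,1]^E`. -/
def InUnitBox (E : Finset (V × V)) (y : V × V → ℝ) : Prop :=
  ∀ e ∈ E, 0 ≤ y e ∧ y e ≤ 1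

/-! ### Paths in the multigraph `G ∪ G'` -/

/-- Vertex list `P_V` of a path in `G ∪ G'` starting at `v`; each step of `q` records the next
vertex together with a flag saying whether the edge used is a lifted edge. -/
def mVerts (v : V) (q : List (V × Bool)) : List V := v :: q.map Prod.fst

/-- The labelled edge list of a path in `G ∪ G'`. -/
def mEdges (v : V) (q : List (V × Bool)) : List ((V × V) × Bool) :=
  List.zipWith (fun a ub => ((a, ub.1), ub.2)) (mVerts v q) q

/-- `P_E`: the set of base edges of a path in `G ∪ G'`. -/
def mBase (v : V) (q : List (V × Bool)) : Finset (V × V) :=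
  ((mEdges v q).filterMap fun eb => if eb.2 then none else some eb.1).toFinset

/-- `P_{E'}`: the set of lifted edges of a path in `G ∪ G'`. -/
def mLifted (v : V) (q : List (V × Bool)) : Finset (V × V) :=
  ((mEdges v q).filterMap fun eb => if eb.2 then some eb.1 else none).toFinset

/-- A `vw`-path in the multigraph `G ∪ G'`: it starts at `v`, ends at `w`, each base step uses
an edge of `E`, each lifted step uses an edge of `E'`, and the sets of base and lifted edges
used are disjoint. -/
def IsMPath (E E' : Finset (V × V)) (v w : V) (q : List (V × Bool)) : Prop :=
  (mVerts v q).getLast? = some w ∧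
  (∀ eb ∈ mEdges v q, if eb.2 then eb.1 ∈ E' else eb.1 ∈ E) ∧
  Disjoint (mBase v q) (mLifted v q)

/-! ### The families of linear inequalities -/

/-- All path inequalities: for every lifted edge `vw ∈ E'` and every `vw`-path `P` in `G`,
`y'_{vw} ≥ Σ_{j ∈ P_V : vj ∈ E} y_{vj} − Σ_{i ∈ P_V∖{v,w}} Σ_{k ∉ P_V : ik ∈ E} y_{ik}`. -/
def PathIneqs (E E' : Finset (V × V)) (y y' : V × V → ℝ) : Prop :=
  ∀ v w : V, (v, w) ∈ E' → ∀ p : List V, IsPath E v w p →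
    (∑ j ∈ p.toFinset.filter (fun j => (v, j) ∈ E), y (v, j))
      - (∑ i ∈ p.toFinset \ {v, w},
          ∑ k ∈ (univ \ p.toFinset).filter (fun k => (i, k) ∈ E), y (i, k))
    ≤ y' (v, w)

/-- All lifted multicut path inequalities: for every lifted edge `vw ∈ E'` and every
`vw`-path `P` in `G`, `y'_{vw} ≥ Σ_{ij ∈ P_E} (y_{ij} − 1) + 1`. -/
def MulticutPathIneqs (E E' : Finset (V × V)) (y y' : V × V → ℝ) : Prop :=
  ∀ v w : V, (v, w) ∈ E' → ∀ p : List V, IsPath E v w p →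
    (∑ e ∈ (pEdges p).toFinset, (y e - 1)) + 1 ≤ y' (v, w)

/-- All lifted path inequalities: for every lifted edge `vw ∈ E'` and every `vw`-path `P` in
`G ∪ G'`, `y'_{vw} ≥ Σ_{j ∈ P_V : vj∈E} y_{vj} − Σ_{i ∈ P_V∖{v,w}} Σ_{k ∉ P_V : ik∈E} y_{ik}
+ Σ_{ij ∈ P_{E'}} y'_{ij} − Σ_{ij ∈ P_{E'} : ij∈E} y_{ij}`. -/
def LiftedPathIneqs (E E' : Finset (V × V)) (y y' : V × V → ℝ) : Prop :=
  ∀ v w : V, (v, w) ∈ E' → ∀ q : List (V × Bool), IsMPath E E' v w q →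
    (∑ j ∈ (mVerts v q).toFinset.filter (fun j => (v, j) ∈ E), y (v, j))
      - (∑ i ∈ (mVerts v q).toFinset \ {v, w},
          ∑ k ∈ (univ \ (mVerts v q).toFinset).filter (fun k => (i, k) ∈ E), y (i, k))
      + (∑ e ∈ mLifted v q, y' e)
      - (∑ e ∈ (mLifted v q).filter (fun e => e ∈ E), y e)
    ≤ y' (v, w)

/-- All path-induced cut inequalities: for every lifted edge `vw ∈ E'`, every node `u` with
`uw ∈ R` and `u ≠ w`, and every `vu`-path `P` in `G`,
`y'_{vw} ≤ Σ_{i ∈ P_V} Σ_{k ∉ P_V : ik∈E, kw∈R} y_{ik}`. -/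
def PathCutIneqs (E E' : Finset (V × V)) (y y' : V × V → ℝ) : Prop :=
  ∀ v w : V, (v, w) ∈ E' → ∀ u : V, Reach E u w → u ≠ w → ∀ p : List V, IsPath E v u p →
    y' (v, w) ≤
      ∑ i ∈ p.toFinset,
        ∑ k ∈ (univ \ p.toFinset).filter (fun k => (i, k) ∈ E ∧ Reach E k w), y (i, k)

/-- All lifted path-induced cut inequalities: for every lifted edge `vw ∈ E'`, every node `u`
with `uw ∈ R` and `u ≠ w`, and every `vu`-path `P` in `G ∪ G'`,
`y'_{vw} ≤ Σ_{i ∈ P_V} Σ_{k ∉ P_V : ik∈E, kw∈R} y_{ik} − Σ_{ij ∈ P_{E'}} y'_{ij}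
+ Σ_{ij ∈ P_{E'} : ij∈E} y_{ij}`. -/
def LiftedPathCutIneqs (E E' : Finset (V × V)) (y y' : V × V → ℝ) : Prop :=
  ∀ v w : V, (v, w) ∈ E' → ∀ u : V, Reach E u w → u ≠ w →
    ∀ q : List (V × Bool), IsMPath E E' v u q →
    y' (v, w) ≤
      (∑ i ∈ (mVerts v q).toFinset,
        ∑ k ∈ (univ \ (mVerts v q).toFinset).filter (fun k => (i, k) ∈ E ∧ Reach E k w),
          y (i, k))
      - (∑ e ∈ mLifted v q, y' e)
      + (∑ e ∈ (mLifted v q).filter (fun e => e ∈ E), y e)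

/-- All strengthened lifted path-induced cut inequalities: for every lifted edge `vw ∈ E'`
and every `vu`-path `P` in `G ∪ G'` with `uw ∈ E'`,
`y'_{vw} ≤ Σ_{i ∈ P_V∖{u}} Σ_{k ∉ P_V : ik∈E, kw∈R} y_{ik} − Σ_{ij ∈ P_{E'}} y'_{ij}
+ Σ_{ij ∈ P_{E'} : ij∈E} y_{ij} + y'_{uw}`. -/
def StrongLiftedPathCutIneqs (E E' : Finset (V × V)) (y y' : V × V → ℝ) : Prop :=
  ∀ v w : V, (v, w) ∈ E' → ∀ u : V, (u, w) ∈ E' →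
    ∀ q : List (V × Bool), IsMPath E E' v u q →
    y' (v, w) ≤
      (∑ i ∈ (mVerts v q).toFinset \ {u},
        ∑ k ∈ (univ \ (mVerts v q).toFinset).filter (fun k => (i, k) ∈ E ∧ Reach E k w),
          y (i, k))
      - (∑ e ∈ mLifted v q, y' e)
      + (∑ e ∈ (mLifted v q).filter (fun e => e ∈ E), y e)
      + y' (u, w)

/-- All symmetric path-induced cut inequalities: for every lifted edge `vw ∈ E'`, every node
`u` with `vu ∈ R` and `u ≠ v`, and every `uw`-path `P` in `G`,
`y'_{vw} ≤ Σ_{i ∈ P_V} Σ_{k ∉ P_V : ki∈E, vk∈R} y_{ki}`. -/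
def SymPathCutIneqs (E E' : Finset (V × V)) (y y' : V × V → ℝ) : Prop :=
  ∀ v w : V, (v, w) ∈ E' → ∀ u : V, Reach E v u → u ≠ v → ∀ p : List V, IsPath E u w p →
    y' (v, w) ≤
      ∑ i ∈ p.toFinset,
        ∑ k ∈ (univ \ p.toFinset).filter (fun k => (k, i) ∈ E ∧ Reach E v k), y (k, i)

/-- All symmetric lifted path-induced cut inequalities: for every lifted edge `vw ∈ E'`,
every node `u` with `vu ∈ R` and `u ≠ v`, and every `uw`-path `P` in `G ∪ G'`,
`y'_{vw} ≤ Σ_{i ∈ P_V} Σ_{k ∉ P_V : ki∈E, vk∈R} y_{ki} − Σ_{ij ∈ P_{E'}} y'_{ij}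
+ Σ_{ij ∈ P_{E'} : ij∈E} y_{ij}`. -/
def SymLiftedPathCutIneqs (E E' : Finset (V × V)) (y y' : V × V → ℝ) : Prop :=
  ∀ v w : V, (v, w) ∈ E' → ∀ u : V, Reach E v u → u ≠ v →
    ∀ q : List (V × Bool), IsMPath E E' u w q →
    y' (v, w) ≤
      (∑ i ∈ (mVerts u q).toFinset,
        ∑ k ∈ (univ \ (mVerts u q).toFinset).filter (fun k => (k, i) ∈ E ∧ Reach E v k),
          y (k, i))
      - (∑ e ∈ mLifted u q, y' e)
      + (∑ e ∈ (mLifted u q).filter (fun e => e ∈ E), y e)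

/-- All strengthened symmetric lifted path-induced cut inequalities: for every lifted edge
`vw ∈ E'` and every `uw`-path `P` in `G ∪ G'` with `vu ∈ E'`,
`y'_{vw} ≤ Σ_{i ∈ P_V∖{u}} Σ_{k ∉ P_V : ki∈E, vk∈R} y_{ki} − Σ_{ij ∈ P_{E'}} y'_{ij}
+ Σ_{ij ∈ P_{E'} : ij∈E} y_{ij} + y'_{vu}`. -/
def StrongSymLiftedPathCutIneqs (E E' : Finset (V × V)) (y y' : V × V → ℝ) : Prop :=
  ∀ v w : V, (v, w) ∈ E' → ∀ u : V, (v, u) ∈ E' →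
    ∀ q : List (V × Bool), IsMPath E E' u w q →
    y' (v, w) ≤
      (∑ i ∈ (mVerts u q).toFinset \ {u},
        ∑ k ∈ (univ \ (mVerts u q).toFinset).filter (fun k => (k, i) ∈ E ∧ Reach E v k),
          y (k, i))
      - (∑ e ∈ mLifted u q, y' e)
      + (∑ e ∈ (mLifted u q).filter (fun e => e ∈ E), y e)
      + y' (v, u)

/-- The two single node cut inequalities for every lifted edge `vw ∈ E'`:
`y'_{vw} ≤ Σ_{u : vu∈E, uw∈R} y_{vu}` and `y'_{vw} ≤ Σ_{u : uw∈E, vu∈R} y_{uw}`. -/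
def SingleNodeCutIneqs (E E' : Finset (V × V)) (y y' : V × V → ℝ) : Prop :=
  ∀ v w : V, (v, w) ∈ E' →
    (y' (v, w) ≤ ∑ u ∈ univ.filter (fun u => (v, u) ∈ E ∧ Reach E u w), y (v, u)) ∧
    (y' (v, w) ≤ ∑ u ∈ univ.filter (fun u => (u, w) ∈ E ∧ Reach E v u), y (u, w))

/-- A feasible integral solution `(x,y,y')` of the lifted disjoint paths problem:
`x,y,y'` are binary, flow conservation holds at every node other than `s` and `t`, and a
lifted edge is active iff there is an active path in `G` between its endpoints. -/
def FeasibleIntegral (E E' : Finset (V × V)) (s t : V)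
    (x : V → ℝ) (y y' : V × V → ℝ) : Prop :=
  (∀ v : V, x v = 0 ∨ x v = 1) ∧
  (∀ e ∈ E, y e = 0 ∨ y e = 1) ∧
  (∀ e ∈ E', y' e = 0 ∨ y' e = 1) ∧
  (∀ v : V, v ≠ s → v ≠ t →
    (∑ u ∈ univ.filter (fun u => (u, v) ∈ E), y (u, v)) = x v ∧
    (∑ w ∈ univ.filter (fun w => (v, w) ∈ E), y (v, w)) = x v) ∧
  (∀ v w : V, (v, w) ∈ E' →
    (y' (v, w) = 1 ↔ ∃ p : List V, IsPath E v w p ∧ ∀ e ∈ pEdges p, y e = 1))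

end LiftedDisjointPaths

namespace SymCutCex

open Finset
open scoped Classical

/-- Edge set of the counterexample network on `Fin 6`:
`0 = s`, `1 = v`, `2 = a`, `3 = b`, `4 = w`, `5 = t`. -/
def Eg : Finset (Fin 6 × Fin 6) := {(0,1),(1,2),(1,3),(2,4),(3,4),(4,5)}

/-- The lifted graph consists of the single lifted edge `(1,4)`. -/
def Eg' : Finset (Fin 6 × Fin 6) := {(1,4)}

noncomputable def yg : Fin 6 × Fin 6 → ℝ :=
  fun e => if e = (1,2) ∨ e = (1,3) then 1 else 0

noncomputable def yg' : Fin 6 × Fin 6 → ℝ := fun e => if e = (1,4) then 1 else 0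

lemma yg_nonneg : ∀ e, 0 ≤ yg e := by
  intro e; unfold yg; split <;> norm_num

lemma edge_lt : ∀ a b : Fin 6, (a,b) ∈ Eg → (a:ℕ) < b := by decide

lemma chain_le : ∀ (p : List (Fin 6)) (x z : Fin 6),
    p.Chain' (fun a b => (a,b) ∈ Eg) →
    p.head? = some x → p.getLast? = some z → (x:ℕ) ≤ z := by
  intro p
  induction p with
  | nil => intro x z _ hh _; simp at hh
  | cons a l ih =>
    intro x z hc hh hl
    simp only [List.head?_cons, Option.some.injEq] at hh
    subst hh
    cases l with
    | nil =>
      simp only [List.getLast?_singleton, Option.some.injEq] at hl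
      subst hl; exact le_refl _
    | cons b m =>
      simp only [List.Chain', List.isChain_cons_cons] at hc
      have hab := edge_lt _ _ hc.1
      have hb := ih _ z hc.2 rfl (by rw [List.getLast?_cons_cons] at hl; exact hl)
      omega

lemma reach_le {x z : Fin 6} (h : Reach Eg x z) : (x:ℕ) ≤ z := by
  rcases h with rfl | ⟨p, hp⟩
  · exact le_refl _
  · exact chain_le p x z hp.2.2.2 hp.2.1 hp.2.2.1

lemma reach24 : Reach Eg 2 4 := Or.inr ⟨[2,4], by simp, rfl, by decide, by simp [Eg, List.Chain']⟩
lemma reach34 : Reach Eg 3 4 := Or.inr ⟨[3,4], by simp, rfl, by decide, by simp [Eg, List.Chain']⟩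
lemma reach14 : Reach Eg 1 4 := Or.inr ⟨[1,2,4], by simp, rfl, by decide, by simp [Eg, List.Chain']⟩

/-- Enumeration of the paths in `G` from `1` to a node `u` with `u ≤ 3`. -/
lemma path_from_one (p : List (Fin 6)) (u : Fin 6) (hu : (u:ℕ) ≤ 3)
    (hp : IsPath Eg 1 u p) : p = [1] ∨ p = [1,2] ∨ p = [1,3] := by
  obtain ⟨hne, hh, hl, hc⟩ := hp
  cases p with
  | nil => exact absurd rfl hne
  | cons a l =>
    simp only [List.head?_cons, Option.some.injEq] at hh
    subst hh
    cases l with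
    | nil => exact Or.inl rfl
    | cons b m =>
      simp only [List.Chain', List.isChain_cons_cons] at hc
      have hb : b = 2 ∨ b = 3 := by
        have := hc.1; fin_cases b <;> revert this <;> decide
      have hlast : (b :: m).getLast? = some u := by
        rw [List.getLast?_cons_cons] at hl; exact hl
      rcases hb with rfl | rfl
      · cases m with
        | nil => exact Or.inr (Or.inl rfl)
        | cons c m' =>
          rw [List.isChain_cons_cons] at hc
          have hc4 : c = 4 := by
            have := hc.2.1; fin_cases c <;> revert this <;> decide
          subst hc4
          have : (4:ℕ) ≤ (u:ℕ) := by
            refine chain_le (4 :: m') 4 u hc.2.2 rfl ?_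
            rw [List.getLast?_cons_cons] at hlast; exact hlast
          omega
      · cases m with
        | nil => exact Or.inr (Or.inr rfl)
        | cons c m' =>
          rw [List.isChain_cons_cons] at hc
          have hc4 : c = 4 := by
            have := hc.2.1; fin_cases c <;> revert this <;> decide
          subst hc4
          have : (4:ℕ) ≤ (u:ℕ) := by
            refine chain_le (4 :: m') 4 u hc.2.2 rfl ?_
            rw [List.getLast?_cons_cons] at hlast; exact hlast
          omega

/-- A single term lower bound for the double cut sum. -/
lemma cut_lb (p : List (Fin 6)) (i k : Fin 6) (hi : i ∈ p.toFinset)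
    (hk : k ∈ (univ \ p.toFinset).filter (fun k => (i,k) ∈ Eg ∧ Reach Eg k 4)) :
    yg (i,k) ≤
      ∑ i ∈ p.toFinset,
        ∑ k ∈ (univ \ p.toFinset).filter (fun k => (i, k) ∈ Eg ∧ Reach Eg k 4), yg (i, k) := by
  calc yg (i,k)
      ≤ ∑ k ∈ (univ \ p.toFinset).filter (fun k => (i, k) ∈ Eg ∧ Reach Eg k 4), yg (i, k) :=
        Finset.single_le_sum (fun _ _ => yg_nonneg _) hk
    _ ≤ _ :=
        Finset.single_le_sum
          (f := fun j => ∑ k ∈ (univ \ p.toFinset).filter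
              (fun k => (j, k) ∈ Eg ∧ Reach Eg k 4), yg (j, k))
          (fun j _ => Finset.sum_nonneg fun _ _ => yg_nonneg _) hi

end SymCutCex

/-- There exist a flow network, a lifted graph and
`(y,y') ∈ [0,1]^E × [0,1]^{E'}` satisfying all path-induced cut inequalities but violating
some symmetric path-induced cut inequality. -/
theorem sym_path_cut_ineqs_strictly_improve :
    ∃ (n : ℕ) (E E' : Finset (Fin n × Fin n)) (s t : Fin n)
      (y y' : Fin n × Fin n → ℝ),
      IsFlowNetwork E s t ∧ IsLiftedGraph E' s t ∧ InUnitBox E y ∧ InUnitBox E' y' ∧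
      PathCutIneqs E E' y y' ∧ ¬ SymPathCutIneqs E E' y y' := by
  classical
  refine ⟨6, SymCutCex.Eg, SymCutCex.Eg', 0, 5, SymCutCex.yg, SymCutCex.yg',
    ?_, ?_, ?_, ?_, ?_, ?_⟩
  · -- flow network
    refine ⟨?_, ?_, ?_⟩
    · intro v w hvw hr
      have h1 := SymCutCex.edge_lt v w hvw
      have h2 := SymCutCex.reach_le hr
      omega
    · intro v
      fin_cases v
      · exact Or.inl rfl
      · exact Or.inr ⟨[0,1], by simp, rfl, by decide, by simp [SymCutCex.Eg, List.Chain']⟩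
      · exact Or.inr ⟨[0,1,2], by simp, rfl, by decide, by simp [SymCutCex.Eg, List.Chain']⟩
      · exact Or.inr ⟨[0,1,3], by simp, rfl, by decide, by simp [SymCutCex.Eg, List.Chain']⟩
      · exact Or.inr ⟨[0,1,2,4], by simp, rfl, by decide, by simp [SymCutCex.Eg, List.Chain']⟩
      · exact Or.inr ⟨[0,1,2,4,5], by simp, rfl, by decide, by simp [SymCutCex.Eg, List.Chain']⟩
    · intro v
      fin_cases v
      · exact Or.inr ⟨[0,1,2,4,5], by simp, rfl, by decide, by simp [SymCutCex.Eg, List.Chain']⟩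
      · exact Or.inr ⟨[1,2,4,5], by simp, rfl, by decide, by simp [SymCutCex.Eg, List.Chain']⟩
      · exact Or.inr ⟨[2,4,5], by simp, rfl, by decide, by simp [SymCutCex.Eg, List.Chain']⟩
      · exact Or.inr ⟨[3,4,5], by simp, rfl, by decide, by simp [SymCutCex.Eg, List.Chain']⟩
      · exact Or.inr ⟨[4,5], by simp, rfl, by decide, by simp [SymCutCex.Eg, List.Chain']⟩
      · exact Or.inl rfl
  · -- lifted graph
    intro e he
    simp [SymCutCex.Eg'] at he
    subst he
    exact ⟨by decide, by decide, by decide, by decide⟩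
  · -- y in unit box
    intro e _
    unfold SymCutCex.yg
    constructor <;> (split <;> norm_num)
  · -- y' in unit box
    intro e _
    unfold SymCutCex.yg'
    constructor <;> (split <;> norm_num)
  · -- path-induced cut inequalities hold
    intro v w hvw u hu hune p hp
    have hvw' : v = 1 ∧ w = 4 := by
      simp [SymCutCex.Eg', Prod.ext_iff] at hvw; exact hvw
    obtain ⟨rfl, rfl⟩ := hvw'
    have hu4 : (u:ℕ) ≤ 4 := SymCutCex.reach_le hu
    have hu4' : (u:ℕ) ≠ 4 := fun h => hune (Fin.ext h)
    have hu3 : (u:ℕ) ≤ 3 := by omega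
    have hy' : SymCutCex.yg' (1,4) = 1 := by simp [SymCutCex.yg']
    rcases SymCutCex.path_from_one p u hu3 hp with rfl | rfl | rfl
    · have h := SymCutCex.cut_lb [1] 1 2 (by simp) ?_
      · have : SymCutCex.yg (1,2) = 1 := by simp [SymCutCex.yg]
        rw [hy']; linarith
      · simp only [Finset.mem_filter, Finset.mem_sdiff, Finset.mem_univ, true_and]
        exact ⟨by decide, by decide, SymCutCex.reach24⟩
    · have h := SymCutCex.cut_lb [1,2] 1 3 (by simp) ?_
      · have : SymCutCex.yg (1,3) = 1 := by simp [SymCutCex.yg]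
        rw [hy']; linarith
      · simp only [Finset.mem_filter, Finset.mem_sdiff, Finset.mem_univ, true_and]
        exact ⟨by decide, by decide, SymCutCex.reach34⟩
    · have h := SymCutCex.cut_lb [1,3] 1 2 (by simp) ?_
      · have : SymCutCex.yg (1,2) = 1 := by simp [SymCutCex.yg]
        rw [hy']; linarith
      · simp only [Finset.mem_filter, Finset.mem_sdiff, Finset.mem_univ, true_and]
        exact ⟨by decide, by decide, SymCutCex.reach24⟩
  · -- symmetric path-induced cut inequality is violated
    intro h
    have hpath : IsPath SymCutCex.Eg 4 4 [4] := ⟨by simp, rfl, rfl, by simp [List.Chain']⟩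
    have h44 : ((4:Fin 6)) ≠ 1 := by decide
    have key := h 1 4 (by simp [SymCutCex.Eg']) 4 SymCutCex.reach14 h44 [4] hpath
    rw [show ([4] : List (Fin 6)).toFinset = {4} by rfl] at key
    rw [Finset.sum_singleton] at key
    have hzero :
        (∑ k ∈ (univ \ ({4} : Finset (Fin 6))).filter
            (fun k => (k, (4:Fin 6)) ∈ SymCutCex.Eg ∧ Reach SymCutCex.Eg 1 k),
          SymCutCex.yg (k, 4)) = 0 := by
      apply Finset.sum_eq_zero
      intro k hk
      simp only [Finset.mem_filter] at hk
      have hkE := hk.2.1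
      fin_cases k <;> simp_all [SymCutCex.Eg, SymCutCex.yg]
    rw [hzero] at key
    have hy' : SymCutCex.yg' (1,4) = 1 := by simp [SymCutCex.yg']
    rw [hy'] at key
    linarith
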